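/- arXiv:2010.12230 — 2 statements merged into one kernel-verified Lean document; each statement's English description precedes it below -/
import Mathlib

section
/- Exact-penalty equivalence for KL-constrained distributionally robust label shift (Proposition 1): Let L ≥ 1, let ℓ : Fin L → ℝ be a bounded loss vector satisfying 0 ≤ ℓ_y ≤ M for all y and some M > 0, and let p ∈ Δ^L have p_y > 0 for every y (p is not on the boundary of the simplex). Then for every r > 0 there exists γ* > 0 such that for every γ_c ≥ γ*, the set of maximizers of the linear objective π ↦ Σ_{y=1}^L π_y ℓ_y over the constrained set {π ∈ Δ^L : KL(π, p) ≤ r} coincides with the set of maximizers over all of Δ^L of the penalized objective π ↦ Σ_{y=1}^L π_y ℓ_y + min{0, γ_c (r − KL(π, p))}. -/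
open scoped BigOperators

noncomputable section

/-- The probability simplex in `ℝ^L`. -/
def simplex (L : ℕ) : Set (Fin L → ℝ) :=
  {π | (∀ i, 0 ≤ π i) ∧ ∑ i, π i = 1}

/-- KL divergence between two vectors on the simplex (with `0 log 0 = 0`). -/
def klDiv {L : ℕ} (a b : Fin L → ℝ) : ℝ :=
  ∑ i, a i * Real.log (a i / b i)

lemma mul_log_div_eq (b : ℝ) (hb : 0 < b) (z : ℝ) (hz : 0 ≤ z) :
    z * Real.log (z / b) = z * Real.log z - z * Real.log b := by
  rcases eq_or_lt_of_le hz with h | h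
  · simp [← h]
  · rw [Real.log_div h.ne' hb.ne']; ring

lemma pointwise_convex (b x y t : ℝ) (hb : 0 < b) (hx : 0 ≤ x) (hy : 0 ≤ y)
    (ht0 : 0 ≤ t) (ht1 : t ≤ 1) :
    ((1 - t) * x + t * y) * Real.log (((1 - t) * x + t * y) / b) ≤
      (1 - t) * (x * Real.log (x / b)) + t * (y * Real.log (y / b)) := by
  have h1t : (0:ℝ) ≤ 1 - t := by linarith
  have hz : 0 ≤ (1 - t) * x + t * y := by positivity
  have hc := Real.convexOn_mul_log.2 (Set.mem_Ici.2 hx) (Set.mem_Ici.2 hy) h1t ht0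
      (by ring : (1 - t) + t = 1)
  simp only [smul_eq_mul] at hc
  rw [mul_log_div_eq b hb _ hz, mul_log_div_eq b hb x hx, mul_log_div_eq b hb y hy]
  nlinarith [hc]

lemma klDiv_self {L : ℕ} (p : Fin L → ℝ) (hppos : ∀ y, 0 < p y) : klDiv p p = 0 := by
  unfold klDiv
  apply Finset.sum_eq_zero
  intro i _
  rw [div_self (hppos i).ne']
  simp

lemma klDiv_mix_le {L : ℕ} (π p : Fin L → ℝ) (hπ : ∀ i, 0 ≤ π i) (hppos : ∀ y, 0 < p y)
    (t : ℝ) (ht0 : 0 ≤ t) (ht1 : t ≤ 1) :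
    klDiv (fun i => (1 - t) * π i + t * p i) p ≤ (1 - t) * klDiv π p := by
  have h : klDiv (fun i => (1 - t) * π i + t * p i) p ≤
      (1 - t) * klDiv π p + t * klDiv p p := by
    unfold klDiv
    rw [Finset.mul_sum, Finset.mul_sum, ← Finset.sum_add_distrib]
    apply Finset.sum_le_sum
    intro i _
    exact pointwise_convex (p i) (π i) (p i) t (hppos i) (hπ i) (hppos i).le ht0 ht1
  rwa [klDiv_self p hppos, mul_zero, add_zero] at h

/-- **Proposition 1** (exact-penalty equivalence for KL-constrained DRO label shift):
for every radius `r > 0` there is `γ* > 0` such that for all `γc ≥ γ*`, the maximizers of the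
linear loss over the KL-ball intersected with the simplex coincide with the maximizers over the
whole simplex of the penalized objective. -/
theorem exact_penalty_equivalence
    {L : ℕ} (hL : 1 ≤ L) (ℓ : Fin L → ℝ) (M : ℝ) (hM : 0 < M)
    (hℓ : ∀ y, 0 ≤ ℓ y ∧ ℓ y ≤ M)
    (p : Fin L → ℝ) (hp : p ∈ simplex L) (hppos : ∀ y, 0 < p y)
    (r : ℝ) (hr : 0 < r) :
    ∃ γstar > (0 : ℝ), ∀ γc ≥ γstar,
      {π | (π ∈ simplex L ∧ klDiv π p ≤ r) ∧
          ∀ π', π' ∈ simplex L → klDiv π' p ≤ r →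
            ∑ y, π' y * ℓ y ≤ ∑ y, π y * ℓ y}
      =
      {π | π ∈ simplex L ∧
          ∀ π' ∈ simplex L,
            (∑ y, π' y * ℓ y) + min 0 (γc * (r - klDiv π' p)) ≤
            (∑ y, π y * ℓ y) + min 0 (γc * (r - klDiv π p))} := by
  -- basic facts about the linear objective
  have fbound : ∀ π ∈ simplex L, 0 ≤ ∑ y, π y * ℓ y ∧ ∑ y, π y * ℓ y ≤ M := by
    intro π hπ
    constructor
    · apply Finset.sum_nonneg; intro i _; exact mul_nonneg (hπ.1 i) (hℓ i).1
    · calc ∑ y, π y * ℓ y ≤ ∑ y, π y * M := by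
            apply Finset.sum_le_sum; intro i _
            exact mul_le_mul_of_nonneg_left (hℓ i).2 (hπ.1 i)
        _ = M := by rw [← Finset.sum_mul, hπ.2, one_mul]
  refine ⟨M / r + 1, by positivity, ?_⟩
  intro γc hγc
  have hγpos : 0 < γc := lt_of_lt_of_le (by positivity) hγc
  have hγMr : M / r < γc := lt_of_lt_of_le (by linarith) hγc
  -- the key mixing construction: from an infeasible π' produce a feasible point
  -- with almost as large objective
  have mix : ∀ π' ∈ simplex L, r < klDiv π' p →
      ∃ π'' ∈ simplex L, klDiv π'' p ≤ r ∧
        ∑ y, π' y * ℓ y ≤ (∑ y, π'' y * ℓ y) + (M / r) * (klDiv π' p - r) := by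
    intro π' hπ' hK
    set K := klDiv π' p with hKdef
    have hKpos : 0 < K := lt_trans hr hK
    set t : ℝ := (K - r) / K with htdef
    have ht0 : 0 ≤ t := div_nonneg (by linarith) hKpos.le
    have ht1 : t ≤ 1 := by
      rw [div_le_one hKpos]; linarith
    refine ⟨fun i => (1 - t) * π' i + t * p i, ⟨?_, ?_⟩, ?_, ?_⟩
    · intro i
      have h1t : (0:ℝ) ≤ 1 - t := by linarith
      exact add_nonneg (mul_nonneg h1t (hπ'.1 i)) (mul_nonneg ht0 (hppos i).le)
    · rw [Finset.sum_add_distrib, ← Finset.mul_sum, ← Finset.mul_sum, hπ'.2, hp.2]; ring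
    · have := klDiv_mix_le π' p hπ'.1 hppos t ht0 ht1
      have h2 : (1 - t) * K = r := by
        rw [htdef, sub_mul, div_mul_cancel₀ _ hKpos.ne']; ring
      calc klDiv (fun i => (1 - t) * π' i + t * p i) p ≤ (1 - t) * K := this
        _ = r := h2
    · have hsum : ∑ y, ((1 - t) * π' y + t * p y) * ℓ y =
          (1 - t) * (∑ y, π' y * ℓ y) + t * (∑ y, p y * ℓ y) := by
        rw [Finset.mul_sum, Finset.mul_sum, ← Finset.sum_add_distrib]
        apply Finset.sum_congr rfl; intro i _; ring
      have hfp : 0 ≤ ∑ y, p y * ℓ y := (fbound p hp).1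
      have hfπ' : ∑ y, π' y * ℓ y ≤ M := (fbound π' hπ').2
      have httK : t ≤ (K - r) / r := by
        rw [htdef, div_le_div_iff₀ hKpos hr]; nlinarith
      have htM : t * M ≤ (M / r) * (K - r) := by
        have : t * M ≤ ((K - r) / r) * M :=
          mul_le_mul_of_nonneg_right httK hM.le
        calc t * M ≤ ((K - r) / r) * M := this
          _ = (M / r) * (K - r) := by ring
      rw [hsum]
      nlinarith [mul_nonneg ht0 hfp]
  -- penalty at feasible points vanishes
  have pen0 : ∀ π : Fin L → ℝ, klDiv π p ≤ r → min 0 (γc * (r - klDiv π p)) = 0 := by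
    intro π h
    exact min_eq_left (by nlinarith)
  have penneg : ∀ π : Fin L → ℝ, r < klDiv π p →
      min 0 (γc * (r - klDiv π p)) = γc * (r - klDiv π p) := by
    intro π h
    exact min_eq_right (by nlinarith)
  ext π
  simp only [Set.mem_setOf_eq]
  constructor
  · rintro ⟨⟨hπs, hπK⟩, hmax⟩
    refine ⟨hπs, ?_⟩
    intro π' hπ'
    rw [pen0 π hπK]
    by_cases hK' : klDiv π' p ≤ r
    · rw [pen0 π' hK']
      simpa using hmax π' hπ' hK'
    · push_neg at hK'
      rw [penneg π' hK']
      obtain ⟨π'', hπ''s, hπ''K, hle⟩ := mix π' hπ' hK'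
      have h1 : ∑ y, π'' y * ℓ y ≤ ∑ y, π y * ℓ y := hmax π'' hπ''s hπ''K
      nlinarith [hγMr, hK', mul_le_mul_of_nonneg_right (le_of_lt hγMr) (by linarith : (0:ℝ) ≤ klDiv π' p - r)]
  · rintro ⟨hπs, hmax⟩
    have hπK : klDiv π p ≤ r := by
      by_contra hK
      push_neg at hK
      obtain ⟨π'', hπ''s, hπ''K, hle⟩ := mix π hπs hK
      have h := hmax π'' hπ''s
      rw [pen0 π'' hπ''K, penneg π hK] at h
      nlinarith [mul_le_mul_of_nonneg_right (le_of_lt hγMr) (by linarith : (0:ℝ) ≤ klDiv π p - r)]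
    refine ⟨⟨hπs, hπK⟩, ?_⟩
    intro π' hπ's hπ'K
    have h := hmax π' hπ's
    rw [pen0 π hπK, pen0 π' hπ'K] at h
    simpa using h
  
end
end

section
/- Regret inequality for the proximal KL mirror step (used in the convergence proof): Let h : Δ^L → ℝ be concave and differentiable on a neighborhood of Δ^L, let λ > 0, g ∈ ℝ^L, and let π_k ∈ Δ^L have all coordinates strictly positive. Let π_{k+1} be a minimizer over Δ^L of π ↦ −2λ⟨g, π⟩ − 2λ h(π) + KL(π, π_k), and assume all coordinates of π_{k+1} are strictly positive. Then for every π* ∈ Δ^L: 2λ ( ⟨g, π* − π_k⟩ + h(π*) − h(π_{k+1}) ) ≤ KL(π*, π_k) − KL(π*, π_{k+1}) + 2λ²‖g‖_∞². -/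
open scoped BigOperators

noncomputable section

private def Gfun (x : ℝ) : ℝ := (x + 1) * Real.log x - 2 * (x - 1)
private def Ffun (x : ℝ) : ℝ := 2 * (x + 2) * (x * Real.log x - x + 1) - 3 * (x - 1) ^ 2

private lemma G_hasDeriv {x : ℝ} (hx : 0 < x) :
    HasDerivAt Gfun (Real.log x + 1 / x - 1) x := by
  have h1 : HasDerivAt (fun y : ℝ => (y + 1) * Real.log y)
      (1 * Real.log x + (x + 1) * x⁻¹) x :=
    ((hasDerivAt_id x).add_const 1).mul (Real.hasDerivAt_log hx.ne')
  have h2 : HasDerivAt (fun y : ℝ => 2 * (y - 1)) 2 x := by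
    simpa using ((hasDerivAt_id x).sub_const 1).const_mul 2
  have h := h1.sub h2
  have he : 1 * Real.log x + (x + 1) * x⁻¹ - 2 = Real.log x + 1 / x - 1 := by
    field_simp
    ring
  rw [he] at h
  exact h

private lemma G_mono : MonotoneOn Gfun (Set.Ioi (0:ℝ)) := by
  apply monotoneOn_of_deriv_nonneg (convex_Ioi 0)
  · intro x hx
    exact ((G_hasDeriv hx).continuousAt).continuousWithinAt
  · intro x hx
    rw [interior_Ioi] at hx
    exact ((G_hasDeriv hx).differentiableAt).differentiableWithinAt
  · intro x hx
    rw [interior_Ioi] at hx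
    rw [(G_hasDeriv hx).deriv]
    have := Real.one_sub_inv_le_log_of_pos hx
    rw [inv_eq_one_div] at this
    linarith

private lemma G_one : Gfun 1 = 0 := by simp [Gfun]

private lemma F_hasDeriv {x : ℝ} (hx : 0 < x) :
    HasDerivAt Ffun (4 * Gfun x) x := by
  have hxl : HasDerivAt (fun y : ℝ => y * Real.log y) (1 * Real.log x + x * x⁻¹) x :=
    (hasDerivAt_id x).mul (Real.hasDerivAt_log hx.ne')
  have h1 : HasDerivAt (fun y : ℝ => 2 * (y + 2) * (y * Real.log y - y + 1))
      (2 * 1 * (x * Real.log x - x + 1)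
        + 2 * (x + 2) * (1 * Real.log x + x * x⁻¹ - 1 + 0)) x := by
    have ha : HasDerivAt (fun y : ℝ => 2 * (y + 2)) (2 * 1) x := by
      simpa using ((hasDerivAt_id x).add_const 2).const_mul 2
    have hb : HasDerivAt (fun y : ℝ => y * Real.log y - y + 1)
        (1 * Real.log x + x * x⁻¹ - 1 + 0) x := by
      simpa using (hxl.sub (hasDerivAt_id x)).add_const 1
    exact ha.mul hb
  have h2 : HasDerivAt (fun y : ℝ => 3 * (y - 1) ^ 2) (3 * (2 * (x - 1))) x := by
    have := (((hasDerivAt_id x).sub_const 1).pow 2).const_mul 3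
    simpa using this
  have h := h1.sub h2
  have he : 2 * 1 * (x * Real.log x - x + 1)
      + 2 * (x + 2) * (1 * Real.log x + x * x⁻¹ - 1 + 0) - 3 * (2 * (x - 1))
      = 4 * Gfun x := by
    rw [Gfun]
    field_simp
    ring
  rw [he] at h
  exact h

private lemma F_one : Ffun 1 = 0 := by simp [Ffun]

private lemma key_ineq {x : ℝ} (hx : 0 < x) :
    3 * (x - 1) ^ 2 ≤ 2 * (x + 2) * (x * Real.log x - x + 1) := by
  have hF : 0 ≤ Ffun x := by
    rcases le_or_gt 1 x with hx1 | hx1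
    · have hmono : MonotoneOn Ffun (Set.Ici (1:ℝ)) := by
        apply monotoneOn_of_deriv_nonneg (convex_Ici 1)
        · intro y hy
          have hy0 : (0:ℝ) < y := lt_of_lt_of_le one_pos hy
          exact ((F_hasDeriv hy0).continuousAt).continuousWithinAt
        · intro y hy
          rw [interior_Ici] at hy
          have hy0 : (0:ℝ) < y := lt_trans one_pos hy
          exact ((F_hasDeriv hy0).differentiableAt).differentiableWithinAt
        · intro y hy
          rw [interior_Ici] at hy
          have hy0 : (0:ℝ) < y := lt_trans one_pos hy
          rw [(F_hasDeriv hy0).deriv]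
          have : Gfun 1 ≤ Gfun y := G_mono (Set.mem_Ioi.2 one_pos) (Set.mem_Ioi.2 hy0) hy.le
          rw [G_one] at this
          linarith
      have := hmono (Set.mem_Ici.2 le_rfl) (Set.mem_Ici.2 hx1) hx1
      rw [F_one] at this
      exact this
    · have hanti : AntitoneOn Ffun (Set.Ioc (0:ℝ) 1) := by
        apply antitoneOn_of_deriv_nonpos (convex_Ioc 0 1)
        · intro y hy
          exact ((F_hasDeriv hy.1).continuousAt).continuousWithinAt
        · intro y hy
          rw [interior_Ioc] at hy
          exact ((F_hasDeriv hy.1).differentiableAt).differentiableWithinAt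
        · intro y hy
          rw [interior_Ioc] at hy
          rw [(F_hasDeriv hy.1).deriv]
          have : Gfun y ≤ Gfun 1 := G_mono (Set.mem_Ioi.2 hy.1) (Set.mem_Ioi.2 one_pos) hy.2.le
          rw [G_one] at this
          linarith
      have := hanti (Set.mem_Ioc.2 ⟨hx, hx1.le⟩) (Set.mem_Ioc.2 ⟨one_pos, le_rfl⟩) hx1.le
      rw [F_one] at this
      exact this
  rw [Ffun] at hF
  linarith

private lemma pt_ineq {a b : ℝ} (ha : 0 ≤ a) (hb : 0 < b) :
    3 * (a - b) ^ 2 ≤ 2 * (a + 2 * b) * (a * Real.log (a / b) - a + b) := by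
  rcases ha.eq_or_lt with rfl | ha'
  · have : (0:ℝ) * Real.log (0 / b) = 0 := by simp
    nlinarith [hb, this]
  · have hk := key_ineq (div_pos ha' hb)
    have hb2 : (0:ℝ) ≤ b ^ 2 := sq_nonneg b
    have hm := mul_le_mul_of_nonneg_left hk hb2
    have e1 : b ^ 2 * (3 * (a / b - 1) ^ 2) = 3 * (a - b) ^ 2 := by
      field_simp
      try ring
    have e2 : b ^ 2 * (2 * (a / b + 2) * (a / b * Real.log (a / b) - a / b + 1))
        = 2 * (a + 2 * b) * (a * Real.log (a / b) - a + b) := by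
      field_simp
      try ring
    rw [e1, e2] at hm
    exact hm



private lemma pinsker {L : ℕ} (a b : Fin L → ℝ) (ha0 : ∀ i, 0 ≤ a i)
    (ha1 : ∑ i, a i = 1) (hb0 : ∀ i, 0 < b i) (hb1 : ∑ i, b i = 1) :
    (∑ i, |a i - b i|) ^ 2 ≤ 2 * klDiv a b := by
  set w : Fin L → ℝ := fun i => (a i + 2 * b i) / 3 with hw
  have hwpos : ∀ i ∈ Finset.univ, 0 < w i := fun i _ => by
    have := ha0 i; have := hb0 i
    simp only [hw]
    positivity
  have hwsum : ∑ i, w i = 1 := by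
    simp only [hw, ← Finset.sum_div, Finset.sum_add_distrib, ← Finset.mul_sum, ha1, hb1]
    norm_num
  have CS := Finset.sq_sum_div_le_sum_sq_div Finset.univ (fun i => |a i - b i|) hwpos
  rw [hwsum, div_one] at CS
  have hpt : ∀ i ∈ Finset.univ, |a i - b i| ^ 2 / w i
      ≤ 2 * (a i * Real.log (a i / b i) - a i + b i) := by
    intro i _
    rw [sq_abs, div_le_iff₀ (hwpos i (Finset.mem_univ i))]
    have := pt_ineq (ha0 i) (hb0 i)
    simp only [hw]
    linarith
  have hsum : ∑ i, 2 * (a i * Real.log (a i / b i) - a i + b i) = 2 * klDiv a b := by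
    simp only [mul_sub, mul_add, Finset.sum_add_distrib, Finset.sum_sub_distrib,
      ← Finset.mul_sum, ha1, hb1, klDiv]
    ring
  calc (∑ i, |a i - b i|) ^ 2 ≤ ∑ i, |a i - b i| ^ 2 / w i := CS
    _ ≤ ∑ i, 2 * (a i * Real.log (a i / b i) - a i + b i) := Finset.sum_le_sum hpt
    _ = 2 * klDiv a b := hsum

private lemma three_point {L : ℕ} (s c p : Fin L → ℝ) (hs : ∀ i, 0 ≤ s i)
    (hc : ∀ i, 0 < c i) (hp : ∀ i, 0 < p i) :
    ∑ i, (s i - c i) * Real.log (c i / p i)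
      = klDiv s p - klDiv s c - klDiv c p := by
  rw [klDiv, klDiv, klDiv, ← Finset.sum_sub_distrib, ← Finset.sum_sub_distrib]
  apply Finset.sum_congr rfl
  intro i _
  rcases (hs i).eq_or_lt with h0 | h0
  · rw [← h0]
    simp
  · rw [Real.log_div h0.ne' (hp i).ne', Real.log_div h0.ne' (hc i).ne',
      Real.log_div (hc i).ne' (hp i).ne']
    ring


private lemma kl_hasDeriv {L : ℕ} (c p d : Fin L → ℝ) (hc : ∀ i, 0 < c i)
    (hp : ∀ i, 0 < p i) :
    HasDerivAt (fun t : ℝ => klDiv (fun i => c i + t * d i) p)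
      (∑ i, (d i * Real.log (c i / p i) + d i)) 0 := by
  have hterm : ∀ i : Fin L, HasDerivAt
      (fun t : ℝ => (c i + t * d i) * (Real.log (c i + t * d i) - Real.log (p i)))
      (d i * Real.log (c i / p i) + d i) 0 := by
    intro i
    have hu : HasDerivAt (fun t : ℝ => c i + t * d i) (d i) 0 := by
      simpa using ((hasDerivAt_id (0:ℝ)).mul_const (d i)).const_add (c i)
    have hne : c i + (0:ℝ) * d i ≠ 0 := by simpa using (hc i).ne'
    have hlog := hu.log hne
    have hmul := hu.mul (hlog.sub_const (Real.log (p i)))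
    have he : d i * (Real.log (c i + 0 * d i) - Real.log (p i))
        + (c i + 0 * d i) * (d i / (c i + 0 * d i))
        = d i * Real.log (c i / p i) + d i := by
      rw [zero_mul, add_zero, Real.log_div (hc i).ne' (hp i).ne',
        mul_div_cancel₀ _ (hc i).ne']
    rw [he] at hmul
    exact hmul
  have hsum := HasDerivAt.fun_sum (fun i (_ : i ∈ Finset.univ) => hterm i)
  have hev : ∀ᶠ t : ℝ in nhds 0, ∀ i, 0 < c i + t * d i := by
    rw [Filter.eventually_all]
    intro i
    have hcont : ContinuousAt (fun t : ℝ => c i + t * d i) 0 := by fun_prop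
    have h0 : (0:ℝ) < c i + 0 * d i := by simpa using hc i
    exact hcont.eventually (eventually_gt_nhds h0)
  have heq : (fun t : ℝ => klDiv (fun i => c i + t * d i) p)
      =ᶠ[nhds 0] (fun t : ℝ => ∑ i, (c i + t * d i)
        * (Real.log (c i + t * d i) - Real.log (p i))) := by
    filter_upwards [hev] with t ht
    rw [klDiv]
    apply Finset.sum_congr rfl
    intro i _
    rw [Real.log_div (ht i).ne' (hp i).ne']
  exact hsum.congr_of_eventuallyEq heq



/-- **Regret inequality for the proximal KL mirror step**: if `π_{k+1}` minimizes
`π ↦ −2λ⟨g, π⟩ − 2λh(π) + KL(π, π_k)` over the simplex, then for every `π*` in the simplex,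
`2λ(⟨g, π* − π_k⟩ + h(π*) − h(π_{k+1})) ≤ KL(π*, π_k) − KL(π*, π_{k+1}) + 2λ²‖g‖_∞²`. -/
theorem kl_mirror_regret
    {L : ℕ} (h : (Fin L → ℝ) → ℝ)
    (hconc : ConcaveOn ℝ (simplex L) h)
    (U : Set (Fin L → ℝ)) (hUopen : IsOpen U) (hUsub : simplex L ⊆ U)
    (hdiff : DifferentiableOn ℝ h U)
    (lam : ℝ) (hlam : 0 < lam) (g : Fin L → ℝ)
    (πk : Fin L → ℝ) (hπk : πk ∈ simplex L) (hπkpos : ∀ i, 0 < πk i)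
    (πk1 : Fin L → ℝ) (hπk1 : πk1 ∈ simplex L) (hπk1pos : ∀ i, 0 < πk1 i)
    (hmin : ∀ π ∈ simplex L,
      (-(2 * lam) * ∑ i, g i * πk1 i - 2 * lam * h πk1 + klDiv πk1 πk)
        ≤ (-(2 * lam) * ∑ i, g i * π i - 2 * lam * h π + klDiv π πk)) :
    ∀ πstar ∈ simplex L,
      2 * lam * ((∑ i, g i * (πstar i - πk i)) + h πstar - h πk1)
        ≤ klDiv πstar πk - klDiv πstar πk1 + 2 * lam ^ 2 * (⨆ i, |g i|) ^ 2 := by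
  intro πstar hπstar
  classical
  obtain ⟨hπk0, hπksum⟩ := hπk
  obtain ⟨hπk10, hπk1sum⟩ := hπk1
  obtain ⟨hπstar0, hπstarsum⟩ := hπstar
  have hdsum : ∑ i, (πstar i - πk1 i) = 0 := by
    rw [Finset.sum_sub_distrib, hπstarsum, hπk1sum, sub_self]
  -- derivative of t ↦ KL(πk1 + t(πstar - πk1), πk) at 0
  have hder : HasDerivAt (fun t : ℝ => klDiv (fun i => πk1 i + t * (πstar i - πk1 i)) πk)
      (∑ i, (πstar i - πk1 i) * Real.log (πk1 i / πk i)) 0 := by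
    have h1 := kl_hasDeriv πk1 πk (fun i => πstar i - πk1 i) hπk1pos hπkpos
    have h2 : (∑ i, ((πstar i - πk1 i) * Real.log (πk1 i / πk i) + (πstar i - πk1 i)))
        = ∑ i, (πstar i - πk1 i) * Real.log (πk1 i / πk i) := by
      rw [Finset.sum_add_distrib, hdsum, add_zero]
    rwa [h2] at h1
  -- slope bound for small positive t
  have hAle : ∀ t ∈ Set.Ioo (0:ℝ) 1,
      2 * lam * ((∑ i, g i * (πstar i - πk1 i)) + h πstar - h πk1)
        ≤ slope (fun t : ℝ => klDiv (fun i => πk1 i + t * (πstar i - πk1 i)) πk) 0 t := by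
    intro t ht
    have hmemt : (fun i => πk1 i + t * (πstar i - πk1 i)) ∈ simplex L := by
      constructor
      · intro i
        have h1 := hπk10 i
        have h2 := hπstar0 i
        show 0 ≤ πk1 i + t * (πstar i - πk1 i)
        nlinarith [ht.1, ht.2]
      · show ∑ i, (πk1 i + t * (πstar i - πk1 i)) = 1
        rw [Finset.sum_add_distrib, ← Finset.mul_sum, hdsum, hπk1sum]
        ring
    have hm := hmin _ hmemt
    have hcc := hconc.2 ⟨hπk10, hπk1sum⟩ ⟨hπstar0, hπstarsum⟩
      (by linarith [ht.2] : (0:ℝ) ≤ 1 - t) ht.1.le (by ring)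
    have hptq : ((1 - t) • πk1 + t • πstar : Fin L → ℝ)
        = fun i => πk1 i + t * (πstar i - πk1 i) := by
      funext i
      simp only [Pi.add_apply, Pi.smul_apply, smul_eq_mul]
      ring
    rw [hptq] at hcc
    simp only [smul_eq_mul] at hcc
    have hlin : ∑ i, g i * (πk1 i + t * (πstar i - πk1 i))
        = (∑ i, g i * πk1 i) + t * ∑ i, g i * (πstar i - πk1 i) := by
      rw [Finset.mul_sum, ← Finset.sum_add_distrib]
      exact Finset.sum_congr rfl fun i _ => by ring
    rw [hlin] at hm
    rw [slope_def_field, sub_zero]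
    have h00 : (fun i => πk1 i + 0 * (πstar i - πk1 i)) = πk1 := by
      funext i
      ring
    rw [h00, le_div_iff₀ ht.1]
    have h2 := mul_le_mul_of_nonneg_left hcc (by positivity : (0:ℝ) ≤ 2 * lam)
    nlinarith [hm, h2]
  have hAD : 2 * lam * ((∑ i, g i * (πstar i - πk1 i)) + h πstar - h πk1)
      ≤ ∑ i, (πstar i - πk1 i) * Real.log (πk1 i / πk i) := by
    have hslope := hasDerivAt_iff_tendsto_slope.1 hder
    have hsub : nhdsWithin (0:ℝ) (Set.Ioi 0) ≤ nhdsWithin (0:ℝ) {(0:ℝ)}ᶜ :=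
      nhdsWithin_mono 0 (fun x hx => Set.mem_compl_singleton_iff.2 (ne_of_gt hx))
    refine ge_of_tendsto (hslope.mono_left hsub) ?_
    filter_upwards [Ioo_mem_nhdsGT zero_lt_one] with t ht using hAle t ht
  -- three-point identity
  have h3 := three_point πstar πk1 πk hπstar0 hπk1pos hπkpos
  rw [h3] at hAD
  -- sup bound
  have hL : 0 < L := by
    rcases Nat.eq_zero_or_pos L with rfl | hL
    · simp at hπksum
    · exact hL
  haveI : Nonempty (Fin L) := ⟨⟨0, hL⟩⟩
  have hM : ∀ i, |g i| ≤ ⨆ j, |g j| := fun i =>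
    le_ciSup (Set.Finite.bddAbove (Set.finite_range fun j => |g j|)) i
  have hM0 : 0 ≤ ⨆ j, |g j| := le_trans (abs_nonneg _) (hM ⟨0, hL⟩)
  have hgb : ∑ i, g i * (πk1 i - πk i)
      ≤ (⨆ j, |g j|) * ∑ i, |πk1 i - πk i| := by
    rw [Finset.mul_sum]
    apply Finset.sum_le_sum
    intro i _
    calc g i * (πk1 i - πk i) ≤ |g i * (πk1 i - πk i)| := le_abs_self _
      _ = |g i| * |πk1 i - πk i| := abs_mul _ _
      _ ≤ (⨆ j, |g j|) * |πk1 i - πk i| :=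
          mul_le_mul_of_nonneg_right (hM i) (abs_nonneg _)
  have hpin := pinsker πk1 πk (fun i => (hπk1pos i).le) hπk1sum hπkpos hπksum
  have habs0 : 0 ≤ ∑ i, |πk1 i - πk i| := Finset.sum_nonneg fun i _ => abs_nonneg _
  have h4 : 2 * lam * ∑ i, g i * (πk1 i - πk i)
      ≤ 2 * lam ^ 2 * (⨆ j, |g j|) ^ 2 + klDiv πk1 πk := by
    have hgb2 := mul_le_mul_of_nonneg_left hgb (by positivity : (0:ℝ) ≤ 2 * lam)
    nlinarith [hpin, sq_nonneg (2 * lam * (⨆ j, |g j|) - ∑ i, |πk1 i - πk i|), hlam.le, hM0]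
  have hsplit : ∑ i, g i * (πstar i - πk i)
      = (∑ i, g i * (πstar i - πk1 i)) + ∑ i, g i * (πk1 i - πk i) := by
    rw [← Finset.sum_add_distrib]
    exact Finset.sum_congr rfl fun i _ => by ring
  rw [hsplit]
  have hring : 2 * lam * (((∑ i, g i * (πstar i - πk1 i)) + ∑ i, g i * (πk1 i - πk i))
        + h πstar - h πk1)
      = 2 * lam * ((∑ i, g i * (πstar i - πk1 i)) + h πstar - h πk1)
        + 2 * lam * ∑ i, g i * (πk1 i - πk i) := by ring
  rw [hring]
  linarith [hAD, h4]

end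
end
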